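/- For every ε > 0 there exists a natural number N depending only on ε (and not on ω, d, h₁, h₂) with the following property: for all ω > 0, all d > 1 and all h₁, h₂ > 0 satisfying d ≥ 2·(max(h₁,h₂))², there exist complex-valued functions α₁,…,α_N on R₁ and β₁,…,β_N on R₂ such that |exp(iω‖x−y‖) − Σ_{i=1}^N αᵢ(x)βᵢ(y)| ≤ ε for all x ∈ R₁ and y ∈ R₂. (Since |exp(iω‖x−y‖)| = 1, this absolute accuracy coincides with relative accuracy ε.) -/

import Mathlib

open Real

/-- The rectangle `R₁ = [dλ/2, 3dλ/2] × [−hλ/2, hλ/2]` with `λ = 2π/ω`. -/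
noncomputable def rectR1 (ω d h : ℝ) : Set (EuclideanSpace ℝ (Fin 2)) :=
  {x | x 0 ∈ Set.Icc (d * (2 * Real.pi / ω) / 2) (3 * d * (2 * Real.pi / ω) / 2) ∧
       x 1 ∈ Set.Icc (-(h * (2 * Real.pi / ω) / 2)) (h * (2 * Real.pi / ω) / 2)}

/-- The rectangle `R₂ = [−3dλ/2, −dλ/2] × [−hλ/2, hλ/2]` with `λ = 2π/ω`. -/
noncomputable def rectR2 (ω d h : ℝ) : Set (EuclideanSpace ℝ (Fin 2)) :=
  {y | y 0 ∈ Set.Icc (-(3 * d * (2 * Real.pi / ω) / 2)) (-(d * (2 * Real.pi / ω) / 2)) ∧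
       y 1 ∈ Set.Icc (-(h * (2 * Real.pi / ω) / 2)) (h * (2 * Real.pi / ω) / 2)}

/-- The residual phase function in rescaled coordinates. -/
noncomputable def oscPhi (w : Fin 6 → ℝ) : ℝ :=
  2 * Real.pi * w 4 * (w 1 + w 3) ^ 2 /
    ((w 0 + w 2) + Real.sqrt ((w 0 + w 2) ^ 2 + w 5 * (w 1 + w 3) ^ 2))

/-- The compact parameter box. -/
noncomputable def oscBox : Set (Fin 6 → ℝ) :=
  Set.Icc ![1/2, -(1/2), 1/2, -(1/2), 0, 0] ![3/2, 1/2, 3/2, 1/2, 1/2, 1/2]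

lemma oscBox_compact : IsCompact oscBox := isCompact_Icc

lemma oscBox_denom (w : Fin 6 → ℝ) (hw : w ∈ oscBox) :
    1 ≤ (w 0 + w 2) + Real.sqrt ((w 0 + w 2) ^ 2 + w 5 * (w 1 + w 3) ^ 2) := by
  obtain ⟨h1, h2⟩ := hw
  have h0 : (1:ℝ)/2 ≤ w 0 := by simpa using h1 0
  have h2' : (1:ℝ)/2 ≤ w 2 := by simpa using h1 2
  have := Real.sqrt_nonneg ((w 0 + w 2) ^ 2 + w 5 * (w 1 + w 3) ^ 2)
  linarith

lemma oscPhi_continuousOn : ContinuousOn oscPhi oscBox := by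
  apply ContinuousOn.div
  · fun_prop
  · fun_prop
  · intro w hw
    have := oscBox_denom w hw
    linarith

lemma osc_aeval_real (w : Fin 6 → ℝ) (p : MvPolynomial (Fin 6) ℝ) :
    (MvPolynomial.aeval w : MvPolynomial (Fin 6) ℝ →ₐ[ℝ] ℝ) p = MvPolynomial.eval w p := by
  rw [MvPolynomial.aeval_def, Algebra.algebraMap_self, MvPolynomial.eval₂_id]

lemma osc_eval_map (w : Fin 6 → ℝ) (p : MvPolynomial (Fin 6) ℝ) :
    MvPolynomial.eval (fun i => (w i : ℂ)) (p.map (algebraMap ℝ ℂ))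
      = ((MvPolynomial.eval w p : ℝ) : ℂ) := by
  rw [MvPolynomial.eval_map, ← MvPolynomial.eval₂_id (g := w) p]
  exact (MvPolynomial.eval₂_comp_left Complex.ofRealHom (RingHom.id ℝ) w p).symm

lemma osc_exists_poly (ε : ℝ) (hε : 0 < ε) :
    ∃ P : MvPolynomial (Fin 6) ℂ, ∀ w ∈ oscBox,
      ‖Complex.exp (Complex.I * (oscPhi w : ℂ)) -
        MvPolynomial.eval (fun i => (w i : ℂ)) P‖ ≤ ε := by
  haveI : CompactSpace oscBox := isCompact_iff_compactSpace.mp oscBox_compact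
  set c : Fin 6 → C(oscBox, ℝ) :=
    fun i => ⟨fun w => w.1 i, (continuous_apply i).comp continuous_subtype_val⟩ with hc
  set A : Subalgebra ℝ C(oscBox, ℝ) := Algebra.adjoin ℝ (Set.range c) with hA
  have hsep : A.SeparatesPoints := by
    intro u v huv
    have : u.1 ≠ v.1 := fun h => huv (Subtype.ext h)
    obtain ⟨i, hi⟩ := Function.ne_iff.mp this
    exact ⟨c i, ⟨c i, Algebra.subset_adjoin ⟨i, rfl⟩, rfl⟩, hi⟩
  have hcont : Continuous fun w : oscBox => oscPhi w.1 := oscPhi_continuousOn.restrict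
  obtain ⟨⟨gp, hgpA⟩, hgp⟩ :=
    ContinuousMap.exists_mem_subalgebra_near_continuous_of_separatesPoints A hsep
      (fun w : oscBox => Real.cos (oscPhi w.1)) (Real.continuous_cos.comp hcont) (ε/2)
      (by linarith)
  obtain ⟨⟨gq, hgqA⟩, hgq⟩ :=
    ContinuousMap.exists_mem_subalgebra_near_continuous_of_separatesPoints A hsep
      (fun w : oscBox => Real.sin (oscPhi w.1)) (Real.continuous_sin.comp hcont) (ε/2)
      (by linarith)
  rw [hA, Algebra.adjoin_range_eq_range_aeval] at hgpA hgqA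
  obtain ⟨p, hp⟩ := hgpA
  obtain ⟨q, hq⟩ := hgqA
  have hp' : MvPolynomial.aeval c p = gp := hp
  have hq' : MvPolynomial.aeval c q = gq := hq
  refine ⟨p.map (algebraMap ℝ ℂ) + MvPolynomial.C Complex.I * q.map (algebraMap ℝ ℂ), ?_⟩
  intro w hw
  have haev : ∀ r : MvPolynomial (Fin 6) ℝ,
      (MvPolynomial.aeval c r : C(oscBox, ℝ)) ⟨w, hw⟩ = MvPolynomial.eval w r := by
    intro r
    rw [show (MvPolynomial.aeval c r : C(oscBox, ℝ)) ⟨w, hw⟩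
        = (ContinuousMap.evalAlgHom ℝ ℝ (⟨w, hw⟩ : oscBox)) (MvPolynomial.aeval c r) from rfl,
      MvPolynomial.comp_aeval_apply]
    rw [show (fun i => (ContinuousMap.evalAlgHom ℝ ℝ (⟨w, hw⟩ : oscBox)) (c i)) = w from rfl]
    exact osc_aeval_real w r
  have hpw : MvPolynomial.eval w p = gp ⟨w, hw⟩ := by rw [← hp', haev]
  have hqw : MvPolynomial.eval w q = gq ⟨w, hw⟩ := by rw [← hq', haev]
  have hgp' := hgp ⟨w, hw⟩
  have hgq' := hgq ⟨w, hw⟩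
  rw [Real.norm_eq_abs] at hgp' hgq'
  simp only [ContinuousMap.coe_mk] at hgp' hgq'
  have heval : MvPolynomial.eval (fun i => (w i : ℂ))
      (p.map (algebraMap ℝ ℂ) + MvPolynomial.C Complex.I * q.map (algebraMap ℝ ℂ))
      = ((MvPolynomial.eval w p : ℝ) : ℂ)
        + Complex.I * ((MvPolynomial.eval w q : ℝ) : ℂ) := by
    simp only [map_add, map_mul, MvPolynomial.eval_C, osc_eval_map]
  rw [heval]
  have hexp : Complex.exp (Complex.I * (oscPhi w : ℂ))
      = ((Real.cos (oscPhi w) : ℝ) : ℂ) + Complex.I * ((Real.sin (oscPhi w) : ℝ) : ℂ) := by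
    rw [mul_comm, Complex.exp_mul_I]
    simp [Complex.ofReal_cos, Complex.ofReal_sin]
    ring
  rw [hexp]
  have hdiff : (((Real.cos (oscPhi w) : ℝ) : ℂ) + Complex.I * ((Real.sin (oscPhi w) : ℝ) : ℂ))
      - (((MvPolynomial.eval w p : ℝ) : ℂ) + Complex.I * ((MvPolynomial.eval w q : ℝ) : ℂ))
      = ((Real.cos (oscPhi w) - MvPolynomial.eval w p : ℝ) : ℂ)
        + ((Real.sin (oscPhi w) - MvPolynomial.eval w q : ℝ) : ℂ) * Complex.I := by
    push_cast; ring
  rw [hdiff]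
  refine le_trans (Complex.norm_le_abs_re_add_abs_im _) ?_
  rw [Complex.add_re, Complex.add_im, Complex.ofReal_re, Complex.mul_re, Complex.mul_im]
  simp only [Complex.ofReal_im, Complex.I_re, Complex.I_im, Complex.ofReal_re]
  rw [hpw, hqw]
  ring_nf
  nlinarith [abs_sub_comm (gp ⟨w, hw⟩) (Real.cos (oscPhi w)),
    abs_sub_comm (gq ⟨w, hw⟩) (Real.sin (oscPhi w)),
    le_abs_self (Real.cos (oscPhi w) - gp ⟨w, hw⟩),
    neg_abs_le (Real.cos (oscPhi w) - gp ⟨w, hw⟩),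
    le_abs_self (Real.sin (oscPhi w) - gq ⟨w, hw⟩),
    neg_abs_le (Real.sin (oscPhi w) - gq ⟨w, hw⟩)]

lemma osc_phase (ω d h L s t : ℝ) (hω : 0 < ω) (hd : 0 < d) (hh : 0 < h)
    (hL : L = 2 * Real.pi / ω) (hs : 0 < s) :
    ω * Real.sqrt (s ^ 2 + t ^ 2) = ω * s +
      2 * Real.pi * (h ^ 2 / d) * (t / (h * L)) ^ 2 /
        ((s / (d * L)) + Real.sqrt ((s / (d * L)) ^ 2 + (h ^ 2 / d ^ 2) * (t / (h * L)) ^ 2)) := by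
  have hπ := Real.pi_pos
  have hLpos : 0 < L := by rw [hL]; positivity
  set r := Real.sqrt (s ^ 2 + t ^ 2) with hr
  have hr2 : r ^ 2 = s ^ 2 + t ^ 2 := Real.sq_sqrt (by positivity)
  have hrnn : 0 ≤ r := Real.sqrt_nonneg _
  have hsr : 0 < s + r := by linarith
  have hinner : (s / (d * L)) ^ 2 + (h ^ 2 / d ^ 2) * (t / (h * L)) ^ 2 = (r / (d * L)) ^ 2 := by
    rw [div_pow, div_pow, div_pow, hr2]
    field_simp
  rw [hinner, Real.sqrt_sq (by positivity), ← add_div]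
  have hωL : ω * L = 2 * Real.pi := by rw [hL]; field_simp
  have hh' : h ≠ 0 := ne_of_gt hh
  have hL' : L ≠ 0 := ne_of_gt hLpos
  have hd' : d ≠ 0 := ne_of_gt hd
  have hsr' : s + r ≠ 0 := ne_of_gt hsr
  have e1 : 2 * Real.pi * (h ^ 2 / d) * (t / (h * L)) ^ 2 / ((s + r) / (d * L))
      = ω * t ^ 2 / (s + r) := by
    rw [← hωL]; field_simp
  rw [e1, ← sub_eq_iff_eq_add', eq_div_iff hsr']
  linear_combination ω * hr2

lemma osc_norm (x y : EuclideanSpace ℝ (Fin 2)) :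
    ‖x - y‖ = Real.sqrt ((x 0 - y 0) ^ 2 + (x 1 - y 1) ^ 2) := by
  rw [EuclideanSpace.norm_eq]
  congr 1
  rw [Fin.sum_univ_two]
  simp [sq_abs]


set_option maxHeartbeats 1000000 in
/-- For every `ε > 0` there is an `N` depending only on `ε` such that for all admissible
`ω, d, h₁, h₂`, the oscillatory kernel `exp(iω‖x−y‖)` admits an `N`-term separated
approximation on `R₁ × R₂` with (absolute = relative) accuracy `ε`. -/
theorem oscillatory_kernel_lowrank (ε : ℝ) (hε : 0 < ε) :
    ∃ N : ℕ, ∀ ω d h₁ h₂ : ℝ, 0 < ω → 1 < d → 0 < h₁ → 0 < h₂ →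
      2 * max h₁ h₂ ^ 2 ≤ d →
      ∃ α β : Fin N → EuclideanSpace ℝ (Fin 2) → ℂ,
        ∀ x ∈ rectR1 ω d h₁, ∀ y ∈ rectR2 ω d h₂,
          ‖Complex.exp (Complex.I * ((ω * ‖x - y‖ : ℝ) : ℂ)) - ∑ i, α i x * β i y‖ ≤ ε := by
  obtain ⟨P, hP⟩ := osc_exists_poly ε hε
  refine ⟨P.support.card, ?_⟩
  intro ω d h₁ h₂ hω hd hh₁ hh₂ hdh
  have hπ := Real.pi_pos
  set L : ℝ := 2 * Real.pi / ω with hLdef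
  have hL : 0 < L := by positivity
  set h : ℝ := max h₁ h₂ with hhdef
  have hh : 0 < h := lt_of_lt_of_le hh₁ (le_max_left _ _)
  have hd0 : (0:ℝ) < d := lt_trans one_pos hd
  set e := P.support.equivFin.symm with he
  set mm : Fin P.support.card → (Fin 6 →₀ ℕ) := fun i => (e i : Fin 6 →₀ ℕ) with hmm
  refine ⟨fun i x => Complex.exp (Complex.I * ω * (x 0 : ℝ)) * P.coeff (mm i) *
      ((x 0 / (d * L) : ℝ) : ℂ) ^ (mm i) 0 * ((x 1 / (h * L) : ℝ) : ℂ) ^ (mm i) 1,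
    fun i y => Complex.exp (-(Complex.I * ω * (y 0 : ℝ))) *
      ((-y 0 / (d * L) : ℝ) : ℂ) ^ (mm i) 2 * ((-y 1 / (h * L) : ℝ) : ℂ) ^ (mm i) 3 *
      ((h ^ 2 / d : ℝ) : ℂ) ^ (mm i) 4 * ((h ^ 2 / d ^ 2 : ℝ) : ℂ) ^ (mm i) 5, ?_⟩
  intro x hx y hy
  obtain ⟨hx0, hx1⟩ := hx
  obtain ⟨hy0, hy1⟩ := hy
  rw [Set.mem_Icc] at hx0 hx1 hy0 hy1
  set w : Fin 6 → ℝ := ![x 0 / (d * L), x 1 / (h * L), -y 0 / (d * L), -y 1 / (h * L),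
    h ^ 2 / d, h ^ 2 / d ^ 2] with hwdef
  -- membership in the box
  have hh₁h : h₁ ≤ h := le_max_left _ _
  have hh₂h : h₂ ≤ h := le_max_right _ _
  have hhd : 2 * h ^ 2 ≤ d := hdh
  have hdL : 0 < d * L := by positivity
  have hhL : 0 < h * L := by positivity
  have h1L : h₁ * L ≤ h * L := mul_le_mul_of_nonneg_right hh₁h hL.le
  have h2L : h₂ * L ≤ h * L := mul_le_mul_of_nonneg_right hh₂h hL.le
  have c0l : (1:ℝ)/2 ≤ x 0 / (d * L) := by rw [le_div_iff₀ hdL]; linarith [hx0.1]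
  have c0u : x 0 / (d * L) ≤ 3/2 := by rw [div_le_iff₀ hdL]; linarith [hx0.2]
  have c1l : -(1/2 : ℝ) ≤ x 1 / (h * L) := by rw [le_div_iff₀ hhL]; linarith [hx1.1]
  have c1u : x 1 / (h * L) ≤ 1/2 := by rw [div_le_iff₀ hhL]; linarith [hx1.2]
  have c2l : (1:ℝ)/2 ≤ -y 0 / (d * L) := by rw [le_div_iff₀ hdL]; linarith [hy0.2]
  have c2u : -y 0 / (d * L) ≤ 3/2 := by rw [div_le_iff₀ hdL]; linarith [hy0.1]
  have c3l : -(1/2 : ℝ) ≤ -y 1 / (h * L) := by rw [le_div_iff₀ hhL]; linarith [hy1.2]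
  have c3u : -y 1 / (h * L) ≤ 1/2 := by rw [div_le_iff₀ hhL]; linarith [hy1.1]
  have c4l : (0:ℝ) ≤ h ^ 2 / d := by positivity
  have c4u : h ^ 2 / d ≤ 1/2 := by rw [div_le_iff₀ hd0]; nlinarith [hhd]
  have c5l : (0:ℝ) ≤ h ^ 2 / d ^ 2 := by positivity
  have c5u : h ^ 2 / d ^ 2 ≤ 1/2 := by rw [div_le_iff₀ (by positivity)]; nlinarith [hhd, hd, sq_nonneg (d-1)]
  have hwK : w ∈ oscBox := by
    refine ⟨?_, ?_⟩ <;> intro i <;> fin_cases i <;>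
      simp only [hwdef, Matrix.cons_val_zero, Matrix.cons_val_one, Matrix.head_cons,
        Fin.mk_zero, Fin.mk_one, Fin.isValue] <;>
      first
        | exact c0l | exact c0u | exact c1l | exact c1u | exact c2l | exact c2u
        | exact c3l | exact c3u | exact c4l | exact c4u | exact c5l | exact c5u
  -- coordinates
  set s : ℝ := x 0 - y 0 with hsdef
  set t : ℝ := x 1 - y 1 with htdef
  have hspos : 0 < s := by
    rw [hsdef]; nlinarith [hx0.1, hy0.2, hdL]
  have hnorm : ‖x - y‖ = Real.sqrt (s ^ 2 + t ^ 2) := osc_norm x y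
  have w0 : w 0 = x 0 / (d * L) := rfl
  have w1 : w 1 = x 1 / (h * L) := rfl
  have w2 : w 2 = -y 0 / (d * L) := rfl
  have w3 : w 3 = -y 1 / (h * L) := rfl
  have w4 : w 4 = h ^ 2 / d := rfl
  have w5 : w 5 = h ^ 2 / d ^ 2 := rfl
  have hPhiw : oscPhi w = 2 * Real.pi * (h ^ 2 / d) * (t / (h * L)) ^ 2 /
      ((s / (d * L)) + Real.sqrt ((s / (d * L)) ^ 2 + (h ^ 2 / d ^ 2) * (t / (h * L)) ^ 2)) := by
    have e02 : w 0 + w 2 = s / (d * L) := by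
      rw [w0, w2, ← add_div, hsdef]; ring_nf
    have e13 : w 1 + w 3 = t / (h * L) := by
      rw [w1, w3, ← add_div, htdef]; ring_nf
    unfold oscPhi
    rw [e02, e13, w4, w5]
  have hkey : ω * ‖x - y‖ = ω * s + oscPhi w := by
    rw [hnorm, hPhiw]
    exact osc_phase ω d h L s t hω hd0 hh hLdef hspos
  have hsC : (s : ℂ) = ((x 0 : ℝ) : ℂ) - ((y 0 : ℝ) : ℂ) := by
    rw [hsdef]; push_cast; ring
  have hexp : Complex.exp (Complex.I * ((ω * ‖x - y‖ : ℝ) : ℂ)) =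
      Complex.exp (Complex.I * ω * (x 0 : ℝ)) * Complex.exp (-(Complex.I * ω * (y 0 : ℝ))) *
        Complex.exp (Complex.I * ((oscPhi w : ℝ) : ℂ)) := by
    rw [← Complex.exp_add, ← Complex.exp_add, hkey]
    congr 1
    push_cast
    linear_combination Complex.I * (ω : ℂ) * hsC
  have hsum : (∑ i : Fin P.support.card,
      (Complex.exp (Complex.I * ω * (x 0 : ℝ)) * P.coeff (mm i) *
        ((x 0 / (d * L) : ℝ) : ℂ) ^ (mm i) 0 * ((x 1 / (h * L) : ℝ) : ℂ) ^ (mm i) 1) *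
      (Complex.exp (-(Complex.I * ω * (y 0 : ℝ))) *
        ((-y 0 / (d * L) : ℝ) : ℂ) ^ (mm i) 2 * ((-y 1 / (h * L) : ℝ) : ℂ) ^ (mm i) 3 *
        ((h ^ 2 / d : ℝ) : ℂ) ^ (mm i) 4 * ((h ^ 2 / d ^ 2 : ℝ) : ℂ) ^ (mm i) 5))
      = Complex.exp (Complex.I * ω * (x 0 : ℝ)) * Complex.exp (-(Complex.I * ω * (y 0 : ℝ))) *
        MvPolynomial.eval (fun i => (w i : ℂ)) P := by
    rw [MvPolynomial.eval_eq', Finset.mul_sum, ← Finset.sum_coe_sort P.support]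
    rw [← Equiv.sum_comp e (fun m : P.support =>
      Complex.exp (Complex.I * ω * (x 0 : ℝ)) * Complex.exp (-(Complex.I * ω * (y 0 : ℝ))) *
        (P.coeff m * ∏ j, (w j : ℂ) ^ (m : Fin 6 →₀ ℕ) j))]
    apply Finset.sum_congr rfl
    intro i _
    rw [Fin.prod_univ_six]
    simp only [hmm]
    rw [w0, w1, w2, w3, w4, w5]
    push_cast
    ring
  rw [hexp, hsum, ← mul_sub]
  rw [norm_mul]
  have habs : ‖Complex.exp (Complex.I * ω * (x 0 : ℝ)) *
      Complex.exp (-(Complex.I * ω * (y 0 : ℝ)))‖ = 1 := by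
    rw [norm_mul, Complex.norm_exp, Complex.norm_exp]
    simp [Complex.mul_re, Complex.mul_im]
  rw [habs, one_mul]
  exact hP w hwK
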